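/- arXiv:2404.08257 — 5 statements merged into one kernel-verified Lean document; each statement's English description precedes it below -/
import Mathlib

section
/- For every (T,R) ∈ D the quantity sin T + cos R is strictly positive, and the map Φ(T,R) = ( log((sin T + cos R)/cos T), sin R/(sin T + cos R) ) is a bijection from D onto ℝ × (0,∞). -/
open Real Set

/-- The domain `D` in the `(T,R)` plane. -/
def FLRWDomain : Set (ℝ × ℝ) :=
  {q : ℝ × ℝ | -(π/2) < q.1 ∧ q.1 < π/2 ∧ 0 < q.2 ∧ q.2 < π ∧ q.1 > q.2 - π/2}

/-- The coordinate change `Φ(T,R) = (t̂, r)`. -/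
noncomputable def FLRWPhi : ℝ × ℝ → ℝ × ℝ :=
  fun q => (Real.log ((Real.sin q.1 + Real.cos q.2) / Real.cos q.1),
            Real.sin q.2 / (Real.sin q.1 + Real.cos q.2))

lemma FLRW_pos {q : ℝ × ℝ} (hq : q ∈ FLRWDomain) : 0 < Real.sin q.1 + Real.cos q.2 := by
  obtain ⟨h1, h2, h3, h4, h5⟩ := hq
  have hmem1 : q.2 - π/2 ∈ Icc (-(π/2)) (π/2) := ⟨by linarith, by linarith⟩
  have hmem2 : q.1 ∈ Icc (-(π/2)) (π/2) := ⟨le_of_lt h1, le_of_lt h2⟩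
  have := Real.strictMonoOn_sin hmem1 hmem2 h5
  rw [Real.sin_sub_pi_div_two] at this
  linarith

lemma FLRW_cos_pos {q : ℝ × ℝ} (hq : q ∈ FLRWDomain) : 0 < Real.cos q.1 :=
  Real.cos_pos_of_mem_Ioo ⟨hq.1, hq.2.1⟩

/-- The key algebraic identity satisfied by points of `D` and their images. -/
lemma FLRW_key {q : ℝ × ℝ} (hq : q ∈ FLRWDomain) :
    Real.tan q.1 =
      (((Real.sin q.1 + Real.cos q.2) / Real.cos q.1) ^ 2 *
          (1 + (Real.sin q.2 / (Real.sin q.1 + Real.cos q.2)) ^ 2) - 1) /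
        (2 * ((Real.sin q.1 + Real.cos q.2) / Real.cos q.1)) := by
  have hp := FLRW_pos hq
  have hc := FLRW_cos_pos hq
  have hpy1 : Real.sin q.1 ^ 2 + Real.cos q.1 ^ 2 = 1 := Real.sin_sq_add_cos_sq _
  have hpy2 : Real.sin q.2 ^ 2 + Real.cos q.2 ^ 2 = 1 := Real.sin_sq_add_cos_sq _
  rw [Real.tan_eq_sin_div_cos]
  field_simp
  linear_combination hpy1 - hpy2

theorem stmt_0 :
    (∀ q ∈ FLRWDomain, 0 < Real.sin q.1 + Real.cos q.2) ∧
    Set.BijOn FLRWPhi FLRWDomain (Set.univ ×ˢ Set.Ioi (0 : ℝ)) := by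
  refine ⟨fun q hq => FLRW_pos hq, ?_, ?_, ?_⟩
  · -- MapsTo
    intro q hq
    refine ⟨trivial, ?_⟩
    exact div_pos (Real.sin_pos_of_pos_of_lt_pi hq.2.2.1 hq.2.2.2.1) (FLRW_pos hq)
  · -- InjOn
    intro q hq q' hq' heq
    have hp := FLRW_pos hq
    have hp' := FLRW_pos hq'
    have hc := FLRW_cos_pos hq
    have hc' := FLRW_cos_pos hq'
    have heq1 : Real.log ((Real.sin q.1 + Real.cos q.2) / Real.cos q.1) =
        Real.log ((Real.sin q'.1 + Real.cos q'.2) / Real.cos q'.1) := congrArg Prod.fst heq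
    have heq2 : Real.sin q.2 / (Real.sin q.1 + Real.cos q.2) =
        Real.sin q'.2 / (Real.sin q'.1 + Real.cos q'.2) := congrArg Prod.snd heq
    have hA : (Real.sin q.1 + Real.cos q.2) / Real.cos q.1 =
        (Real.sin q'.1 + Real.cos q'.2) / Real.cos q'.1 := by
      rw [← Real.exp_log (div_pos hp hc), ← Real.exp_log (div_pos hp' hc'), heq1]
    have hT : q.1 = q'.1 := by
      apply Real.injOn_tan ⟨hq.1, hq.2.1⟩ ⟨hq'.1, hq'.2.1⟩
      rw [FLRW_key hq, FLRW_key hq', hA, heq2]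
    have hR : Real.cos q.2 = Real.cos q'.2 := by
      have h1 : Real.cos q.2 = ((Real.sin q.1 + Real.cos q.2) / Real.cos q.1) * Real.cos q.1
          - Real.sin q.1 := by field_simp; ring
      have h2 : Real.cos q'.2 = ((Real.sin q'.1 + Real.cos q'.2) / Real.cos q'.1) * Real.cos q'.1
          - Real.sin q'.1 := by field_simp; ring
      rw [h1, h2, hA, hT]
    have : q.2 = q'.2 :=
      Real.injOn_cos ⟨le_of_lt hq.2.2.1, le_of_lt hq.2.2.2.1⟩
        ⟨le_of_lt hq'.2.2.1, le_of_lt hq'.2.2.2.1⟩ hR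
    exact Prod.ext hT this
  · -- SurjOn
    intro p hp
    obtain ⟨-, hr⟩ := hp
    set a : ℝ := Real.exp p.1 with ha_def
    have ha : 0 < a := Real.exp_pos _
    have hr0 : 0 < p.2 := hr
    set T : ℝ := Real.arctan ((a ^ 2 * (1 + p.2 ^ 2) - 1) / (2 * a)) with hT_def
    have hTmem : T ∈ Ioo (-(π/2)) (π/2) := Real.arctan_mem_Ioo _
    have hc : 0 < Real.cos T := Real.cos_pos_of_mem_Ioo hTmem
    have htan : Real.sin T / Real.cos T = (a ^ 2 * (1 + p.2 ^ 2) - 1) / (2 * a) := by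
      rw [← Real.tan_eq_sin_div_cos, hT_def, Real.tan_arctan]
    have h2 : 2 * a * Real.sin T = (a ^ 2 * (1 + p.2 ^ 2) - 1) * Real.cos T := by
      have := htan
      field_simp at this
      linarith
    have hpy : Real.sin T ^ 2 + Real.cos T ^ 2 = 1 := Real.sin_sq_add_cos_sq _
    set x : ℝ := a * Real.cos T - Real.sin T with hx_def
    have hsq : x ^ 2 + (p.2 * a * Real.cos T) ^ 2 = 1 := by
      rw [hx_def]; linear_combination hpy - Real.cos T * h2
    have hrac : 0 < p.2 * a * Real.cos T := by positivity
    have hx2 : x ^ 2 < 1 := by nlinarith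
    have hxlt : x < 1 := by nlinarith
    have hxgt : -1 < x := by nlinarith
    set R : ℝ := Real.arccos x with hR_def
    have hcosR : Real.cos R = x := Real.cos_arccos (le_of_lt hxgt) (le_of_lt hxlt)
    have hsinR : Real.sin R = p.2 * a * Real.cos T := by
      rw [hR_def, Real.sin_arccos]
      rw [show 1 - x ^ 2 = (p.2 * a * Real.cos T) ^ 2 by linarith]
      exact Real.sqrt_sq (le_of_lt hrac)
    have hR0 : 0 < R := Real.arccos_pos.2 hxlt
    have hRpi : R < π := lt_of_le_of_ne (Real.arccos_le_pi x) (by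
      intro h
      have : Real.sin R = 0 := by rw [h]; exact Real.sin_pi
      linarith [hrac, hsinR ▸ this])
    have hac : Real.sin T + Real.cos R = a * Real.cos T := by rw [hcosR, hx_def]; ring
    have hmemD : (T, R) ∈ FLRWDomain := by
      refine ⟨hTmem.1, hTmem.2, hR0, hRpi, ?_⟩
      show T > R - π/2
      have hmem1 : R - π/2 ∈ Icc (-(π/2)) (π/2) := ⟨by linarith, by linarith⟩
      have hmem2 : T ∈ Icc (-(π/2)) (π/2) := ⟨le_of_lt hTmem.1, le_of_lt hTmem.2⟩
      have hlt : Real.sin (R - π/2) < Real.sin T := by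
        rw [Real.sin_sub_pi_div_two]
        nlinarith [hac]
      exact (Real.strictMonoOn_sin.lt_iff_lt hmem1 hmem2).1 hlt
    refine ⟨(T, R), hmemD, ?_⟩
    have hdiv : (Real.sin T + Real.cos R) / Real.cos T = a := by
      rw [hac]; field_simp
    apply Prod.ext
    · show Real.log ((Real.sin T + Real.cos R) / Real.cos T) = p.1
      rw [hdiv, ha_def, Real.log_exp]
    · show Real.sin R / (Real.sin T + Real.cos R) = p.2
      rw [hsinR, hac]
      field_simp
end

section
/- Define on D the functions t̂(T,R) = log((sin T + cos R)/cos T) and r(T,R) = sin R/(sin T + cos R). Then at every point of D the following identities hold: (1) (∂t̂/∂T)² − e^{2t̂} (∂r/∂T)² = 1/cos² T; (2) (∂t̂/∂T)(∂t̂/∂R) − e^{2t̂} (∂r/∂T)(∂r/∂R) = 0; (3) −(∂t̂/∂R)² + e^{2t̂} (∂r/∂R)² = 1/cos² T; (4) e^{2t̂} r² = sin² R / cos² T. (These express that the pullback of the metric −dt̂² + e^{2t̂}(dr² + r² dΩ²) under the coordinate change equals (1/cos²T)(−dT² + dR² + sin²R dΩ²).) -/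
open Real Set

/-- `t̂(T,R) = log((sin T + cos R)/cos T)`. -/
noncomputable def tHat (T R : ℝ) : ℝ := Real.log ((Real.sin T + Real.cos R) / Real.cos T)

/-- `r(T,R) = sin R/(sin T + cos R)`. -/
noncomputable def rComov (T R : ℝ) : ℝ := Real.sin R / (Real.sin T + Real.cos R)

/-- At every point of `D`, the coordinate change `(T,R) ↦ (t̂, r)` pulls back the metric
`-dt̂² + e^{2t̂}(dr² + r² dΩ²)` to `(1/cos²T)(-dT² + dR² + sin²R dΩ²)`, expressed through
the four identities on the partial derivatives below. -/
theorem stmt_2 (T R : ℝ) (h1 : -(π/2) < T) (h2 : T < π/2) (h3 : 0 < R) (h4 : R < π)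
    (h5 : T > R - π/2) :
    (deriv (fun s => tHat s R) T) ^ 2
        - Real.exp (2 * tHat T R) * (deriv (fun s => rComov s R) T) ^ 2
      = 1 / Real.cos T ^ 2 ∧
    (deriv (fun s => tHat s R) T) * (deriv (fun s => tHat T s) R)
        - Real.exp (2 * tHat T R) * (deriv (fun s => rComov s R) T)
            * (deriv (fun s => rComov T s) R)
      = 0 ∧
    -(deriv (fun s => tHat T s) R) ^ 2
        + Real.exp (2 * tHat T R) * (deriv (fun s => rComov T s) R) ^ 2
      = 1 / Real.cos T ^ 2 ∧
    Real.exp (2 * tHat T R) * rComov T R ^ 2 = Real.sin R ^ 2 / Real.cos T ^ 2 := by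

  have hc : 0 < Real.cos T := Real.cos_pos_of_mem_Ioo ⟨h1, h2⟩
  have hS : 0 < Real.sin T + Real.cos R := by
    have hlt : Real.sin (R - π/2) < Real.sin T :=
      Real.sin_lt_sin_of_lt_of_le_pi_div_two (by linarith) (le_of_lt h2) h5
    rw [Real.sin_sub_pi_div_two] at hlt
    linarith
  have hSc : (0:ℝ) < (Real.sin T + Real.cos R) / Real.cos T := div_pos hS hc
  -- derivative of tHat in T
  have dT1 : HasDerivAt (fun s => (Real.sin s + Real.cos R) / Real.cos s)
      ((Real.cos T * Real.cos T - (Real.sin T + Real.cos R) * (-Real.sin T)) / Real.cos T ^ 2) T :=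
    ((Real.hasDerivAt_sin T).add_const _).div (Real.hasDerivAt_cos T) hc.ne'
  have hT1 : deriv (fun s => tHat s R) T
      = (Real.cos T * Real.cos T - (Real.sin T + Real.cos R) * (-Real.sin T)) / Real.cos T ^ 2
        / ((Real.sin T + Real.cos R) / Real.cos T) := by
    have := (dT1.log hSc.ne').deriv
    simpa [tHat] using this
  -- derivative of tHat in R
  have dR1 : HasDerivAt (fun s => (Real.sin T + Real.cos s) / Real.cos T)
      (-Real.sin R / Real.cos T) R := by
    have : HasDerivAt (fun s => Real.sin T + Real.cos s) (-Real.sin R) R :=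
      (Real.hasDerivAt_cos R).const_add _
    exact this.div_const _
  have hR1 : deriv (fun s => tHat T s) R
      = (-Real.sin R / Real.cos T) / ((Real.sin T + Real.cos R) / Real.cos T) := by
    have := (dR1.log hSc.ne').deriv
    simpa [tHat] using this
  -- derivative of rComov in T
  have hT2 : deriv (fun s => rComov s R) T
      = (0 * (Real.sin T + Real.cos R) - Real.sin R * Real.cos T)
          / (Real.sin T + Real.cos R) ^ 2 := by
    have : HasDerivAt (fun s => Real.sin R / (Real.sin s + Real.cos R))
        ((0 * (Real.sin T + Real.cos R) - Real.sin R * Real.cos T)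
          / (Real.sin T + Real.cos R) ^ 2) T :=
      (hasDerivAt_const T _).div ((Real.hasDerivAt_sin T).add_const _) hS.ne'
    simpa [rComov] using this.deriv
  -- derivative of rComov in R
  have hR2 : deriv (fun s => rComov T s) R
      = (Real.cos R * (Real.sin T + Real.cos R) - Real.sin R * (-Real.sin R))
          / (Real.sin T + Real.cos R) ^ 2 := by
    have : HasDerivAt (fun s => Real.sin s / (Real.sin T + Real.cos s))
        ((Real.cos R * (Real.sin T + Real.cos R) - Real.sin R * (-Real.sin R))
          / (Real.sin T + Real.cos R) ^ 2) R :=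
      (Real.hasDerivAt_sin R).div ((Real.hasDerivAt_cos R).const_add _) hS.ne'
    simpa [rComov] using this.deriv
  have hexp : Real.exp (2 * tHat T R) = ((Real.sin T + Real.cos R) / Real.cos T) ^ 2 := by
    rw [tHat, two_mul, Real.exp_add, Real.exp_log hSc]; ring
  have hpy : Real.sin T ^ 2 + Real.cos T ^ 2 = 1 := Real.sin_sq_add_cos_sq T
  have hpyR : Real.sin R ^ 2 + Real.cos R ^ 2 = 1 := Real.sin_sq_add_cos_sq R
  have hT1' : deriv (fun s => tHat s R) T
      = (1 + Real.sin T * Real.cos R) / (Real.cos T * (Real.sin T + Real.cos R)) := by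
    rw [hT1, show Real.cos T * Real.cos T - (Real.sin T + Real.cos R) * (-Real.sin T)
        = 1 + Real.sin T * Real.cos R from by linear_combination hpy]
    field_simp
  have hR1' : deriv (fun s => tHat T s) R
      = -Real.sin R / (Real.sin T + Real.cos R) := by
    rw [hR1]; field_simp
  have hT2' : deriv (fun s => rComov s R) T
      = -(Real.sin R * Real.cos T) / (Real.sin T + Real.cos R) ^ 2 := by
    rw [hT2]; ring
  have hR2' : deriv (fun s => rComov T s) R
      = (1 + Real.sin T * Real.cos R) / (Real.sin T + Real.cos R) ^ 2 := by
    rw [hR2, show Real.cos R * (Real.sin T + Real.cos R) - Real.sin R * (-Real.sin R)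
        = 1 + Real.sin T * Real.cos R from by linear_combination hpyR]
  have key : (1 + Real.sin T * Real.cos R) ^ 2
      = (Real.sin T + Real.cos R) ^ 2 + (Real.sin R * Real.cos T) ^ 2 := by
    linear_combination (Real.cos R ^ 2 - 1) * hpy - Real.cos T ^ 2 * hpyR
  rw [hT1', hR1', hT2', hR2', hexp, rComov]
  refine ⟨?_, ?_, ?_, ?_⟩
  · rw [div_pow, div_pow, key]; field_simp; ring
  · field_simp; ring
  · rw [show ((1 + Real.sin T * Real.cos R) / (Real.sin T + Real.cos R) ^ 2) ^ 2
        = ((Real.sin T + Real.cos R) ^ 2 + (Real.sin R * Real.cos T) ^ 2)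
            / ((Real.sin T + Real.cos R) ^ 2) ^ 2 from by rw [div_pow, key]]
    field_simp; ring
  · field_simp
end

section
/- Let n ≥ 2, let ρ > 0, and let σ : [0,1] → ℝⁿ be a C¹ curve with ‖σ(τ)‖ ≥ ρ for all τ ∈ [0,1]. Then the Euclidean length of σ, ∫_0^1 ‖σ′(τ)‖ dτ, is at least ρ · θ, where θ ∈ [0, π] is the angle between the vectors σ(0) and σ(1), i.e. θ = arccos( ⟨σ(0), σ(1)⟩ / (‖σ(0)‖ · ‖σ(1)‖) ). Equivalently, any curve staying outside the open ball of radius ρ has length at least ρ times the intrinsic spherical distance between the radial projections of its endpoints. -/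
open Real Set
open scoped RealInnerProductSpace

/-- Cauchy–Schwarz style estimate for the derivative of the normalized inner product. -/
lemma stmt8_key {E : Type*} [NormedAddCommGroup E] [InnerProductSpace ℝ E]
    (u x y : E) (hu : ‖u‖ = 1) (hx : x ≠ 0) :
    |⟪u, y⟫ * ‖x‖ ^ 2 - ⟪u, x⟫ * ⟪x, y⟫| ≤
      ‖x‖ * Real.sqrt (‖x‖ ^ 2 - ⟪u, x⟫ ^ 2) * ‖y‖ := by
  set X := ‖x‖ with hX
  have hX0 : 0 < X := norm_pos_iff.mpr hx
  set a : E := (X ^ 2) • u - ⟪u, x⟫ • x with ha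
  set w : E := (X ^ 2) • y - ⟪x, y⟫ • x with hw
  have hxx : ⟪x, x⟫ = X ^ 2 := real_inner_self_eq_norm_sq x
  have hinner : ⟪a, w⟫ = X ^ 2 * (⟪u, y⟫ * X ^ 2 - ⟪u, x⟫ * ⟪x, y⟫) := by
    simp only [ha, hw, inner_sub_left, inner_sub_right, real_inner_smul_left,
      real_inner_smul_right, hxx, real_inner_comm x u]
    ring
  have hna : ‖a‖ ^ 2 = X ^ 2 * (X ^ 2 - ⟪u, x⟫ ^ 2) := by
    have : ‖a‖ ^ 2 = ⟪a, a⟫ := (real_inner_self_eq_norm_sq a).symm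
    rw [this]
    simp only [ha, inner_sub_left, inner_sub_right, real_inner_smul_left,
      real_inner_smul_right, hxx, real_inner_comm x u,
      real_inner_self_eq_norm_sq u, hu]
    ring
  have hnw : ‖w‖ ^ 2 = X ^ 2 * (X ^ 2 * ‖y‖ ^ 2 - ⟪x, y⟫ ^ 2) := by
    have : ‖w‖ ^ 2 = ⟪w, w⟫ := (real_inner_self_eq_norm_sq w).symm
    rw [this]
    simp only [hw, inner_sub_left, inner_sub_right, real_inner_smul_left,
      real_inner_smul_right, hxx, real_inner_comm x y,
      real_inner_self_eq_norm_sq y]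
    ring
  have hCS : |⟪a, w⟫| ≤ ‖a‖ * ‖w‖ := abs_real_inner_le_norm a w
  have hP2 : ⟪u, x⟫ ^ 2 ≤ X ^ 2 := by
    have := abs_real_inner_le_norm u x
    rw [hu, one_mul] at this
    nlinarith [abs_nonneg ⟪u, x⟫, sq_abs ⟪u, x⟫]
  have hR2 : ⟪x, y⟫ ^ 2 ≤ X ^ 2 * ‖y‖ ^ 2 := by
    have := abs_real_inner_le_norm x y
    nlinarith [abs_nonneg ⟪x, y⟫, sq_abs ⟪x, y⟫, norm_nonneg y]
  have hnaa : ‖a‖ = X * Real.sqrt (X ^ 2 - ⟪u, x⟫ ^ 2) := by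
    have h1 : ‖a‖ = Real.sqrt (‖a‖ ^ 2) := (Real.sqrt_sq (norm_nonneg a)).symm
    rw [h1, hna, Real.sqrt_mul (by positivity), Real.sqrt_sq hX0.le]
  have hnww : ‖w‖ ≤ X * (X * ‖y‖) := by
    have h1 : ‖w‖ = Real.sqrt (‖w‖ ^ 2) := (Real.sqrt_sq (norm_nonneg w)).symm
    rw [h1, hnw]
    have : X ^ 2 * (X ^ 2 * ‖y‖ ^ 2 - ⟪x, y⟫ ^ 2) ≤ (X * (X * ‖y‖)) ^ 2 := by
      nlinarith [sq_nonneg ⟪x, y⟫]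
    calc Real.sqrt (X ^ 2 * (X ^ 2 * ‖y‖ ^ 2 - ⟪x, y⟫ ^ 2)) ≤
        Real.sqrt ((X * (X * ‖y‖)) ^ 2) := Real.sqrt_le_sqrt this
      _ = X * (X * ‖y‖) := Real.sqrt_sq (by positivity)
  have hfin : X ^ 2 * |⟪u, y⟫ * X ^ 2 - ⟪u, x⟫ * ⟪x, y⟫| ≤
      X ^ 2 * (X * Real.sqrt (X ^ 2 - ⟪u, x⟫ ^ 2) * ‖y‖) := by
    have h2 : |⟪a, w⟫| = X ^ 2 * |⟪u, y⟫ * X ^ 2 - ⟪u, x⟫ * ⟪x, y⟫| := by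
      rw [hinner, abs_mul, abs_of_nonneg (by positivity : (0:ℝ) ≤ X ^ 2)]
    have h3 : ‖a‖ * ‖w‖ ≤ X * Real.sqrt (X ^ 2 - ⟪u, x⟫ ^ 2) * (X * (X * ‖y‖)) := by
      rw [hnaa]
      exact mul_le_mul_of_nonneg_left hnww (by positivity)
    calc X ^ 2 * |⟪u, y⟫ * X ^ 2 - ⟪u, x⟫ * ⟪x, y⟫| = |⟪a, w⟫| := h2.symm
      _ ≤ ‖a‖ * ‖w‖ := hCS
      _ ≤ X * Real.sqrt (X ^ 2 - ⟪u, x⟫ ^ 2) * (X * (X * ‖y‖)) := h3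
      _ = X ^ 2 * (X * Real.sqrt (X ^ 2 - ⟪u, x⟫ ^ 2) * ‖y‖) := by ring
  have := le_of_mul_le_mul_left (by
    calc X ^ 2 * |⟪u, y⟫ * X ^ 2 - ⟪u, x⟫ * ⟪x, y⟫| ≤
        X ^ 2 * (X * Real.sqrt (X ^ 2 - ⟪u, x⟫ ^ 2) * ‖y‖) := hfin) (by positivity : (0:ℝ) < X ^ 2)
  exact this

set_option maxHeartbeats 1600000 in
/-- Any `C¹` curve in `ℝⁿ` (`n ≥ 2`) staying outside the open ball of radius `ρ` has
Euclidean length at least `ρ` times the angle between its endpoints, i.e. `ρ` times the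
great-circle distance between the radial projections of its endpoints. -/
theorem stmt_8 (n : ℕ) (hn : 2 ≤ n) (ρ : ℝ) (hρ : 0 < ρ)
    (σ σ' : ℝ → EuclideanSpace ℝ (Fin n))
    (hderiv : ∀ τ ∈ Set.Icc (0 : ℝ) 1, HasDerivWithinAt σ (σ' τ) (Set.Icc 0 1) τ)
    (hcont : ContinuousOn σ' (Set.Icc 0 1))
    (hout : ∀ τ ∈ Set.Icc (0 : ℝ) 1, ρ ≤ ‖σ τ‖) :
    ρ * Real.arccos (⟪σ 0, σ 1⟫ / (‖σ 0‖ * ‖σ 1‖)) ≤ ∫ τ in (0 : ℝ)..1, ‖σ' τ‖ := by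
  have h0m : (0:ℝ) ∈ Icc (0:ℝ) 1 := by norm_num
  have h1m : (1:ℝ) ∈ Icc (0:ℝ) 1 := by norm_num
  have hσ0pos : 0 < ‖σ 0‖ := lt_of_lt_of_le hρ (hout 0 h0m)
  have hσ0ne : σ 0 ≠ 0 := by
    intro h; rw [h, norm_zero] at hσ0pos; exact lt_irrefl 0 hσ0pos
  set u : EuclideanSpace ℝ (Fin n) := ‖σ 0‖⁻¹ • σ 0 with hu_def
  have hu : ‖u‖ = 1 := norm_smul_inv_norm hσ0ne
  set g : ℝ → ℝ := fun t => ⟪u, σ t⟫ / Real.sqrt ⟪σ t, σ t⟫ with hg_def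
  have hxpos : ∀ τ ∈ Icc (0:ℝ) 1, 0 < ‖σ τ‖ := fun τ hτ => lt_of_lt_of_le hρ (hout τ hτ)
  have hxne : ∀ τ ∈ Icc (0:ℝ) 1, σ τ ≠ 0 := by
    intro τ hτ h
    have := hxpos τ hτ; rw [h, norm_zero] at this; exact lt_irrefl 0 this
  have hsq : ∀ τ ∈ Icc (0:ℝ) 1, Real.sqrt ⟪σ τ, σ τ⟫ = ‖σ τ‖ := by
    intro τ hτ
    rw [real_inner_self_eq_norm_sq, Real.sqrt_sq (norm_nonneg _)]
  have hgval : ∀ τ ∈ Icc (0:ℝ) 1, g τ = ⟪u, σ τ⟫ / ‖σ τ‖ := by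
    intro τ hτ; rw [hg_def]; simp only; rw [hsq τ hτ]
  have hgabs : ∀ τ ∈ Icc (0:ℝ) 1, |g τ| ≤ 1 := by
    intro τ hτ
    rw [hgval τ hτ, abs_div, abs_of_pos (hxpos τ hτ)]
    rw [div_le_one (hxpos τ hτ)]
    calc |⟪u, σ τ⟫| ≤ ‖u‖ * ‖σ τ‖ := abs_real_inner_le_norm u (σ τ)
      _ = ‖σ τ‖ := by rw [hu, one_mul]
  have hσcont : ContinuousOn σ (Icc 0 1) := fun τ hτ => (hderiv τ hτ).continuousWithinAt
  have hgcont : ContinuousOn g (Icc 0 1) := by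
    apply ContinuousOn.div (continuousOn_const.inner hσcont)
      (Real.continuous_sqrt.comp_continuousOn (hσcont.inner hσcont))
    intro τ hτ
    simp only [Function.comp_apply]
    rw [hsq τ hτ]
    exact (hxpos τ hτ).ne'
  have hnormcont : ContinuousOn (fun s => ‖σ' s‖) (Icc (0:ℝ) 1) := hcont.norm
  have hIcont : ContinuousOn (fun t => ∫ s in (0:ℝ)..t, ‖σ' s‖) (Icc (0:ℝ) 1) := by
    have h := intervalIntegral.continuousOn_primitive_interval
      (f := fun s => ‖σ' s‖) (μ := MeasureTheory.volume) (a := (0:ℝ)) (b := (1:ℝ))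
      (by rw [uIcc_of_le (zero_le_one : (0:ℝ) ≤ 1)]; exact hnormcont.integrableOn_Icc)
    rwa [uIcc_of_le (zero_le_one : (0:ℝ) ≤ 1)] at h
  set I : ℝ := ∫ τ in (0 : ℝ)..1, ‖σ' τ‖ with hI_def
  have g0 : g 0 = 1 := by
    rw [hgval 0 h0m, hu_def, real_inner_smul_left, real_inner_self_eq_norm_sq]
    field_simp
  have g1 : ⟪σ 0, σ 1⟫ / (‖σ 0‖ * ‖σ 1‖) = g 1 := by
    rw [hgval 1 h1m, hu_def, real_inner_smul_left]
    field_simp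
  have key : ∀ c ∈ Ioo (0:ℝ) 1,
      Real.arccos (c * g 1) - Real.arccos c ≤ (1/ρ) * I := by
    intro c hc
    set Φ : ℝ → ℝ := fun t => Real.arccos (c * g t) -
      (1/ρ) * ∫ s in (0:ℝ)..t, ‖σ' s‖ with hΦ_def
    have hΦder : ∀ τ ∈ Ioo (0:ℝ) 1, ∃ d, HasDerivAt Φ d τ ∧ d ≤ 0 := by
      intro τ hτ
      have hτIcc : τ ∈ Icc (0:ℝ) 1 := Ioo_subset_Icc_self hτ
      have hd : HasDerivAt σ (σ' τ) τ :=
        (hderiv τ hτIcc).hasDerivAt (Icc_mem_nhds hτ.1 hτ.2)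
      set X : ℝ := ‖σ τ‖ with hX_def
      set P : ℝ := ⟪u, σ τ⟫ with hP_def
      set Q : ℝ := ⟪u, σ' τ⟫ with hQ_def
      set R : ℝ := ⟪σ τ, σ' τ⟫ with hR_def
      set Y : ℝ := ‖σ' τ‖ with hY_def
      have hXpos : 0 < X := hxpos τ hτIcc
      have hXρ : ρ ≤ X := hout τ hτIcc
      -- derivative of the inner product ⟪σ t, σ t⟫
      have hq : HasDerivAt (fun t => ⟪σ t, σ t⟫) (R + R) τ := by
        have h1 := hd.inner ℝ hd
        have h2 : ⟪σ τ, σ' τ⟫ + ⟪σ' τ, σ τ⟫ = R + R := by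
          have h3 := real_inner_comm (σ' τ) (σ τ)
          rw [hR_def]
          linarith
        exact h2 ▸ h1
      have hsqτ : Real.sqrt ⟪σ τ, σ τ⟫ = X := hsq τ hτIcc
      have hqne : ⟪σ τ, σ τ⟫ ≠ 0 := by
        rw [real_inner_self_eq_norm_sq]
        positivity
      have hr : HasDerivAt (fun t => Real.sqrt ⟪σ t, σ t⟫) (R / X) τ := by
        have h1 := (Real.hasDerivAt_sqrt hqne).comp τ hq
        have h2 : 1 / (2 * Real.sqrt ⟪σ τ, σ τ⟫) * (R + R) = R / X := by
          rw [hsqτ]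
          field_simp
          ring
        exact h2 ▸ h1
      have hp : HasDerivAt (fun t => ⟪u, σ t⟫) Q τ := by
        have h1 := (hasDerivAt_const τ u).inner ℝ hd
        have h2 : ⟪u, σ' τ⟫ + ⟪(0 : EuclideanSpace ℝ (Fin n)), σ τ⟫ = Q := by
          rw [inner_zero_left, add_zero]
        exact h2 ▸ h1
      set G : ℝ := (Q * X ^ 2 - P * R) / X ^ 3 with hG_def
      have hgd : HasDerivAt g G τ := by
        have h1 := hp.div hr (by rw [hsqτ]; exact hXpos.ne')
        rw [hsqτ, ← hP_def] at h1
        have h2 : (Q * X - P * (R / X)) / X ^ 2 = G := by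
          rw [hG_def]
          field_simp
        exact h2 ▸ h1
      -- arccos composition
      have hgτabs : |g τ| ≤ 1 := hgabs τ hτIcc
      have hcgabs : |c * g τ| < 1 := by
        rw [abs_mul, abs_of_pos hc.1]
        calc c * |g τ| ≤ c * 1 := by
              exact mul_le_mul_of_nonneg_left hgτabs hc.1.le
          _ < 1 := by rw [mul_one]; exact hc.2
      have hcg1 : c * g τ ≠ 1 := by
        intro h; rw [h] at hcgabs; simp at hcgabs
      have hcg2 : c * g τ ≠ -1 := by
        intro h; rw [h] at hcgabs; simp at hcgabs
      set s : ℝ := Real.sqrt (1 - (c * g τ) ^ 2) with hs_def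
      have hspos : 0 < s := by
        apply Real.sqrt_pos.mpr
        nlinarith [abs_nonneg (c * g τ), sq_abs (c * g τ)]
      have hac : HasDerivAt (fun t => Real.arccos (c * g t))
          (-(1 / s) * (c * G)) τ :=
        by have := (Real.hasDerivAt_arccos hcg2 hcg1).comp τ (hgd.const_mul c); exact this
      -- derivative of the primitive
      have hIder : HasDerivAt (fun t => ∫ s in (0:ℝ)..t, ‖σ' s‖) Y τ := by
        apply intervalIntegral.integral_hasDerivAt_right
        · apply ContinuousOn.intervalIntegrable
          apply hnormcont.mono
          rw [uIcc_of_le hτ.1.le]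
          exact Icc_subset_Icc le_rfl hτ.2.le
        · exact ContinuousOn.stronglyMeasurableAtFilter isOpen_Ioo
            (hnormcont.mono Ioo_subset_Icc_self) τ hτ
        · exact hnormcont.continuousAt (Icc_mem_nhds hτ.1 hτ.2)
      have hΦd : HasDerivAt Φ (-(1 / s) * (c * G) - (1/ρ) * Y) τ :=
        hac.sub (hIder.const_mul (1/ρ))
      refine ⟨_, hΦd, ?_⟩
      -- Now the bound: -(1/s) * (c*G) ≤ (1/ρ) * Y
      have hkey := stmt8_key u (σ τ) (σ' τ) hu (hxne τ hτIcc)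
      rw [← hP_def, ← hQ_def, ← hR_def, ← hX_def, ← hY_def] at hkey
      have hYnn : (0:ℝ) ≤ Y := norm_nonneg _
      have hgτ : g τ = P / X := hgval τ hτIcc
      have hP2 : P ^ 2 ≤ X ^ 2 := by
        have h1 := abs_real_inner_le_norm u (σ τ)
        rw [hu, one_mul] at h1
        nlinarith [abs_nonneg P, sq_abs P]
      have hsg : Real.sqrt (X ^ 2 - P ^ 2) = X * Real.sqrt (1 - (g τ) ^ 2) := by
        rw [hgτ, div_pow]
        have h1 : (1 : ℝ) - P ^ 2 / X ^ 2 = (X ^ 2 - P ^ 2) / X ^ 2 := by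
          field_simp
        rw [h1, Real.sqrt_div (by nlinarith : (0:ℝ) ≤ X ^ 2 - P ^ 2),
          Real.sqrt_sq hXpos.le]
        field_simp
      -- |G| ≤ √(1 - g τ ^ 2) * Y / X
      have hGle : |G| ≤ Real.sqrt (1 - (g τ) ^ 2) * Y / X := by
        rw [hG_def, abs_div, abs_of_pos (by positivity : (0:ℝ) < X ^ 3)]
        rw [div_le_div_iff₀ (by positivity) hXpos]
        calc |Q * X ^ 2 - P * R| * X ≤ (X * Real.sqrt (X ^ 2 - P ^ 2) * Y) * X := by
              exact mul_le_mul_of_nonneg_right hkey hXpos.le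
          _ = Real.sqrt (1 - (g τ) ^ 2) * Y * X ^ 3 := by rw [hsg]; ring
      -- c * √(1 - g²) ≤ s
      have hcs : c * Real.sqrt (1 - (g τ) ^ 2) ≤ s := by
        have h1 : c * Real.sqrt (1 - (g τ) ^ 2) =
            Real.sqrt (c ^ 2 * (1 - (g τ) ^ 2)) := by
          rw [Real.sqrt_mul (by positivity), Real.sqrt_sq hc.1.le]
        rw [h1, hs_def]
        apply Real.sqrt_le_sqrt
        have hg2 : (g τ) ^ 2 ≤ 1 := by
          nlinarith [abs_nonneg (g τ), sq_abs (g τ)]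
        nlinarith [hc.1, hc.2, sq_nonneg (g τ)]
      have hYX : Y / X ≤ Y / ρ := by
        apply div_le_div_of_nonneg_left hYnn hρ hXρ
      have hbound : c * |G| ≤ s * (Y / ρ) := by
        calc c * |G| ≤ c * (Real.sqrt (1 - (g τ) ^ 2) * Y / X) := by
              exact mul_le_mul_of_nonneg_left hGle hc.1.le
          _ = (c * Real.sqrt (1 - (g τ) ^ 2)) * (Y / X) := by ring
          _ ≤ s * (Y / ρ) := by
              apply mul_le_mul hcs hYX (by positivity) hspos.le
      have hmain : -(1 / s) * (c * G) ≤ (1/ρ) * Y := by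
        have h1 : -(c * G) ≤ c * |G| := by
          have h := neg_le_abs (c * G)
          rwa [abs_mul, abs_of_pos hc.1] at h
        have h2 : -(1 / s) * (c * G) = (1 / s) * (-(c * G)) := by ring
        rw [h2]
        calc (1 / s) * (-(c * G)) ≤ (1 / s) * (c * |G|) := by
              exact mul_le_mul_of_nonneg_left h1 (by positivity)
          _ ≤ (1 / s) * (s * (Y / ρ)) := by
              exact mul_le_mul_of_nonneg_left hbound (by positivity)
          _ = Y / ρ := by field_simp
          _ = (1/ρ) * Y := by ring
      linarith
    -- Φ is antitone on [0,1]
    have hΦanti : AntitoneOn Φ (Icc (0:ℝ) 1) := by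
      apply antitoneOn_of_deriv_nonpos (convex_Icc 0 1)
      · apply ContinuousOn.sub
        · exact Real.continuous_arccos.comp_continuousOn (continuousOn_const.mul hgcont)
        · exact continuousOn_const.mul hIcont
      · rw [interior_Icc]
        intro τ hτ
        obtain ⟨d, hd, _⟩ := hΦder τ hτ
        exact hd.differentiableAt.differentiableWithinAt
      · rw [interior_Icc]
        intro τ hτ
        obtain ⟨d, hd, hd0⟩ := hΦder τ hτ
        rw [hd.deriv]
        exact hd0
    have h10 : Φ 1 ≤ Φ 0 := hΦanti h0m h1m zero_le_one
    have hΦ0 : Φ 0 = Real.arccos c := by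
      rw [hΦ_def]
      simp [g0, intervalIntegral.integral_same]
    have hΦ1 : Φ 1 = Real.arccos (c * g 1) - (1/ρ) * I := by
      rw [hΦ_def, hI_def]
    rw [hΦ1, hΦ0] at h10
    linarith
  -- take the limit c → 1⁻
  have hlim : Filter.Tendsto (fun c : ℝ => Real.arccos (c * g 1) - Real.arccos c)
      (nhdsWithin (1:ℝ) (Iio 1)) (nhds (Real.arccos (g 1))) := by
    have hcontF : Continuous fun c : ℝ => Real.arccos (c * g 1) - Real.arccos c :=
      (Real.continuous_arccos.comp (continuous_id.mul continuous_const)).sub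
        Real.continuous_arccos
    have h := (hcontF.tendsto 1).mono_left
      (nhdsWithin_le_nhds : nhdsWithin (1:ℝ) (Iio 1) ≤ nhds 1)
    simpa [Real.arccos_one] using h
  have hfinal : Real.arccos (g 1) ≤ (1/ρ) * I := by
    apply le_of_tendsto hlim
    filter_upwards [Ioo_mem_nhdsLT_of_mem (⟨zero_lt_one, le_refl 1⟩ : (1:ℝ) ∈ Ioc (0:ℝ) 1)]
      with c hc
    exact key c hc
  rw [g1]
  have := mul_le_mul_of_nonneg_left hfinal hρ.le
  calc ρ * Real.arccos (g 1) ≤ ρ * ((1/ρ) * I) := this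
    _ = I := by field_simp
end

section
/- Let n ≥ 2. Let a, ρ : (−∞, t₀) → (0, ∞) be functions with a(t)·ρ(t) → ∞ as t → −∞. Let x₁, x₂ : (−∞, t₀) → ℝⁿ be maps with ‖xᵢ(t)‖ ≥ ρ(t) for all t, and suppose the unit vectors xᵢ(t)/‖xᵢ(t)‖ converge as t → −∞ to limits ω₁, ω₂ ∈ S^{n−1} with ω₁ ≠ ω₂. Then for every K > 0 there exists t_K < t₀ such that for all t < t_K, every C¹ curve σ : [0,1] → ℝⁿ with σ(0) = x₁(t), σ(1) = x₂(t) and ‖σ(τ)‖ ≥ ρ(t) for all τ satisfies a(t) · ∫_0^1 ‖σ′(τ)‖ dτ ≥ K. In particular, the distance between x₁(t) and x₂(t) in the region {‖x‖ ≥ ρ(t)} with respect to the rescaled metric a(t)²·(Euclidean) diverges to ∞ as t → −∞. -/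
open Real Set Filter RealInnerProductSpace

lemma key_ineq {E : Type*} [NormedAddCommGroup E] [InnerProductSpace ℝ E]
    (u v : E) (hu : ‖u‖ = 1) (hv : ‖v‖ = 1) (ρ r₁ r₂ : ℝ) (hρ : 0 < ρ)
    (h1 : ρ ≤ r₁) (h2 : ρ ≤ r₂) : ρ * ‖u - v‖ ≤ ‖r₁ • u - r₂ • v‖ := by
  have hcs : ⟪u, v⟫ ≤ 1 := by
    calc ⟪u, v⟫ ≤ ‖u‖ * ‖v‖ := real_inner_le_norm u v
    _ = 1 := by rw [hu, hv]; ring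
  have e1 : ‖u - v‖ ^ 2 = 2 - 2 * ⟪u, v⟫ := by
    rw [norm_sub_sq_real, hu, hv]; ring
  have e2 : ‖r₁ • u - r₂ • v‖ ^ 2 = r₁ ^ 2 + r₂ ^ 2 - 2 * (r₁ * r₂ * ⟪u, v⟫) := by
    rw [norm_sub_sq_real, norm_smul, norm_smul, real_inner_smul_left, real_inner_smul_right,
      hu, hv, Real.norm_eq_abs, Real.norm_eq_abs, abs_of_pos (hρ.trans_le h1),
      abs_of_pos (hρ.trans_le h2)]
    ring
  have hr : ρ * ρ ≤ r₁ * r₂ := mul_le_mul h1 h2 hρ.le (hρ.trans_le h1).le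
  have h3 : (ρ * ‖u - v‖) ^ 2 ≤ ‖r₁ • u - r₂ • v‖ ^ 2 := by
    rw [e2, mul_pow, e1]
    nlinarith [sq_nonneg (r₁ - r₂), mul_nonneg (sub_nonneg.2 hr) (sub_nonneg.2 hcs)]
  calc ρ * ‖u - v‖ = Real.sqrt ((ρ * ‖u - v‖) ^ 2) := (Real.sqrt_sq (by positivity)).symm
    _ ≤ Real.sqrt (‖r₁ • u - r₂ • v‖ ^ 2) := Real.sqrt_le_sqrt h3
    _ = _ := Real.sqrt_sq (norm_nonneg _)

lemma length_ge {E : Type*} [NormedAddCommGroup E] [NormedSpace ℝ E] [CompleteSpace E]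
    (σ σ' : ℝ → E) (hσ : ∀ τ ∈ Set.Icc (0:ℝ) 1, HasDerivWithinAt σ (σ' τ) (Set.Icc 0 1) τ)
    (hc : ContinuousOn σ' (Set.Icc 0 1)) :
    ‖σ 1 - σ 0‖ ≤ ∫ τ in (0:ℝ)..1, ‖σ' τ‖ := by
  have huicc : Set.uIcc (0:ℝ) 1 = Set.Icc 0 1 := uIcc_of_le (by norm_num)
  have hint : IntervalIntegrable σ' MeasureTheory.volume 0 1 :=
    (hc.mono huicc.subset).intervalIntegrable
  have heq : ∫ τ in (0:ℝ)..1, σ' τ = σ 1 - σ 0 :=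
    intervalIntegral.integral_eq_sub_of_hasDeriv_right_of_le (by norm_num)
      (fun τ hτ => (hσ τ hτ).continuousWithinAt)
      (fun τ hτ => ((hσ τ (Set.Ioo_subset_Icc_self hτ)).mono_of_mem_nhdsWithin
        (Icc_mem_nhdsGT_of_mem ⟨hτ.1.le, hτ.2⟩))) hint
  calc ‖σ 1 - σ 0‖ = ‖∫ τ in (0:ℝ)..1, σ' τ‖ := by rw [heq]
    _ ≤ ∫ τ in (0:ℝ)..1, ‖σ' τ‖ :=
        intervalIntegral.norm_integral_le_integral_norm (by norm_num)

/-- The geometric obstruction: if `a(t)·ρ(t) → ∞` as `t → -∞`, the points `x₁(t), x₂(t)` lie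
outside the ball of radius `ρ(t)` and their radial projections converge to two distinct
directions `ω₁ ≠ ω₂` on the unit sphere, then the distance between `x₁(t)` and `x₂(t)` in the
region `{‖x‖ ≥ ρ(t)}` with respect to the rescaled metric `a(t)²·(Euclidean)` diverges: for
every `K > 0`, for all sufficiently negative `t`, every `C¹` curve from `x₁(t)` to `x₂(t)`
staying outside the ball of radius `ρ(t)` has `a(t)·(Euclidean length) ≥ K`. -/
theorem stmt_9 (n : ℕ) (hn : 2 ≤ n) (t₀ : ℝ) (a ρ : ℝ → ℝ)
    (hapos : ∀ t < t₀, 0 < a t) (hρpos : ∀ t < t₀, 0 < ρ t)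
    (haρ : Tendsto (fun t => a t * ρ t) atBot atTop)
    (x₁ x₂ : ℝ → EuclideanSpace ℝ (Fin n))
    (hx₁ : ∀ t < t₀, ρ t ≤ ‖x₁ t‖) (hx₂ : ∀ t < t₀, ρ t ≤ ‖x₂ t‖)
    (ω₁ ω₂ : EuclideanSpace ℝ (Fin n)) (hω₁ : ‖ω₁‖ = 1) (hω₂ : ‖ω₂‖ = 1) (hne : ω₁ ≠ ω₂)
    (hlim₁ : Tendsto (fun t => (‖x₁ t‖)⁻¹ • x₁ t) atBot (nhds ω₁))
    (hlim₂ : Tendsto (fun t => (‖x₂ t‖)⁻¹ • x₂ t) atBot (nhds ω₂)) :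
    ∀ K > 0, ∃ tK < t₀, ∀ t < tK,
      ∀ σ σ' : ℝ → EuclideanSpace ℝ (Fin n),
        (∀ τ ∈ Set.Icc (0 : ℝ) 1, HasDerivWithinAt σ (σ' τ) (Set.Icc 0 1) τ) →
        ContinuousOn σ' (Set.Icc 0 1) →
        σ 0 = x₁ t → σ 1 = x₂ t →
        (∀ τ ∈ Set.Icc (0 : ℝ) 1, ρ t ≤ ‖σ τ‖) →
        K ≤ a t * ∫ τ in (0 : ℝ)..1, ‖σ' τ‖ := by
  intro K hK
  set ε : ℝ := ‖ω₁ - ω₂‖ / 2 with hε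
  have hεpos : 0 < ε := by
    have : ω₁ - ω₂ ≠ 0 := sub_ne_zero.2 hne
    simpa [hε] using half_pos (norm_pos_iff.2 this)
  -- eventually the unit vectors are ε-separated
  have hdiff : Tendsto (fun t => ‖(‖x₁ t‖⁻¹ • x₁ t) - (‖x₂ t‖⁻¹ • x₂ t)‖) atBot
      (nhds ‖ω₁ - ω₂‖) := ((hlim₁.sub hlim₂).norm)
  have hev1 : ∀ᶠ t in atBot, ε ≤ ‖(‖x₁ t‖⁻¹ • x₁ t) - (‖x₂ t‖⁻¹ • x₂ t)‖ := by
    filter_upwards [hdiff.eventually (eventually_gt_nhds (by linarith [hεpos] : ε < ‖ω₁ - ω₂‖))]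
      with t ht using ht.le
  have hev2 : ∀ᶠ t in atBot, K / ε ≤ a t * ρ t := haρ.eventually_ge_atTop (K / ε)
  rcases (hev1.and hev2).exists_forall_of_atBot with ⟨b, hb⟩
  refine ⟨min b t₀ - 1, by linarith [min_le_right b t₀], ?_⟩
  intro t ht σ σ' hσ hσ' h0 h1 hout
  have htt₀ : t < t₀ := by have := min_le_right b t₀; linarith
  have htb : t ≤ b := by have := min_le_left b t₀; linarith
  obtain ⟨hsep, hKρ⟩ := hb t htb
  have hρt := hρpos t htt₀
  have hat := hapos t htt₀
  have hr₁ := hx₁ t htt₀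
  have hr₂ := hx₂ t htt₀
  have hn₁ : (0:ℝ) < ‖x₁ t‖ := hρt.trans_le hr₁
  have hn₂ : (0:ℝ) < ‖x₂ t‖ := hρt.trans_le hr₂
  -- endpoint distance lower bound
  have hkey : ρ t * ‖(‖x₁ t‖⁻¹ • x₁ t) - (‖x₂ t‖⁻¹ • x₂ t)‖ ≤ ‖x₁ t - x₂ t‖ := by
    have := key_ineq (‖x₁ t‖⁻¹ • x₁ t) (‖x₂ t‖⁻¹ • x₂ t)
      (by rw [norm_smul, Real.norm_eq_abs, abs_of_pos (inv_pos.2 hn₁)]; field_simp)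
      (by rw [norm_smul, Real.norm_eq_abs, abs_of_pos (inv_pos.2 hn₂)]; field_simp)
      (ρ t) ‖x₁ t‖ ‖x₂ t‖ hρt hr₁ hr₂
    rwa [smul_smul, smul_smul, mul_inv_cancel₀ hn₁.ne', mul_inv_cancel₀ hn₂.ne',
      one_smul, one_smul] at this
  have hlen : ‖σ 1 - σ 0‖ ≤ ∫ τ in (0:ℝ)..1, ‖σ' τ‖ := length_ge σ σ' hσ hσ'
  rw [h0, h1] at hlen
  have h4 : ρ t * ε ≤ ‖x₂ t - x₁ t‖ := by
    calc ρ t * ε ≤ ρ t * ‖(‖x₁ t‖⁻¹ • x₁ t) - (‖x₂ t‖⁻¹ • x₂ t)‖ :=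
          mul_le_mul_of_nonneg_left hsep hρt.le
      _ ≤ ‖x₁ t - x₂ t‖ := hkey
      _ = ‖x₂ t - x₁ t‖ := norm_sub_rev _ _
  calc K = (K / ε) * ε := by field_simp
    _ ≤ (a t * ρ t) * ε := mul_le_mul_of_nonneg_right hKρ hεpos.le
    _ = a t * (ρ t * ε) := by ring
    _ ≤ a t * ‖x₂ t - x₁ t‖ := mul_le_mul_of_nonneg_left h4 hat.le
    _ ≤ a t * ∫ τ in (0:ℝ)..1, ‖σ' τ‖ := mul_le_mul_of_nonneg_left hlen hat.le
end

section
/- Let n ≥ 2 and let T*, T₀, u* be real numbers with T* < T₀ < u*. Let R : (T*, T₀] → ℝ and ω : (T*, T₀] → S^{n−1} ⊂ ℝⁿ be C¹ maps such that for every T ∈ (T*, T₀]: R′(T)² + R(T)²·‖ω′(T)‖² < 1 and R(T) ≥ u* − T. Then ω(T) converges in S^{n−1} as T → T*⁺ (i.e. the limit lim_{T → T*⁺} ω(T) exists). -/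
open Real Set Filter

/-- The analytic core of Proposition (a)(iii): if `T ↦ (T, R(T), ω(T))` is a `C¹` curve on
`(T*, T₀]` with values satisfying `R'(T)² + R(T)²·‖ω'(T)‖² < 1` (timelikeness for the
Einstein static metric) and `R(T) ≥ u* - T` with `T* < T₀ < u*`, then the spherical part
`ω(T)` converges in the unit sphere `S^{n-1}` as `T → T*⁺`. -/
theorem stmt_10 (n : ℕ) (hn : 2 ≤ n) (Tstar T₀ ustar : ℝ)
    (hT : Tstar < T₀) (hu : T₀ < ustar)
    (R R' : ℝ → ℝ) (ω ω' : ℝ → EuclideanSpace ℝ (Fin n))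
    (hR : ∀ T ∈ Set.Ioc Tstar T₀, HasDerivAt R (R' T) T)
    (hω : ∀ T ∈ Set.Ioc Tstar T₀, HasDerivAt ω (ω' T) T)
    (hR' : ContinuousOn R' (Set.Ioc Tstar T₀))
    (hω' : ContinuousOn ω' (Set.Ioc Tstar T₀))
    (hsphere : ∀ T ∈ Set.Ioc Tstar T₀, ‖ω T‖ = 1)
    (htimelike : ∀ T ∈ Set.Ioc Tstar T₀, R' T ^ 2 + R T ^ 2 * ‖ω' T‖ ^ 2 < 1)
    (hlower : ∀ T ∈ Set.Ioc Tstar T₀, ustar - T ≤ R T) :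
    ∃ L : EuclideanSpace ℝ (Fin n), ‖L‖ = 1 ∧
      Tendsto ω (nhdsWithin Tstar (Set.Ioi Tstar)) (nhds L) := by
  set K : ℝ := (ustar - T₀)⁻¹ with hKdef
  have hK0 : 0 < ustar - T₀ := by linarith
  have hKpos : 0 < K := inv_pos.mpr hK0
  -- uniform bound on the derivative
  have hbound : ∀ T ∈ Set.Ioc Tstar T₀, ‖ω' T‖ ≤ K := by
    intro T hT'
    have h1 := htimelike T hT'
    have h2 := hlower T hT'
    have hRT : ustar - T₀ ≤ R T := le_trans (by linarith [hT'.2]) h2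
    have hn' : 0 ≤ ‖ω' T‖ := norm_nonneg _
    rw [hKdef, ← one_div, le_div_iff₀ hK0]
    nlinarith [sq_nonneg (R' T), sq_nonneg (‖ω' T‖ * R T - 1),
      mul_le_mul_of_nonneg_left hRT hn']
  -- Lipschitz estimate on the interval
  have hlip : ∀ x ∈ Set.Ioc Tstar T₀, ∀ y ∈ Set.Ioc Tstar T₀,
      ‖ω y - ω x‖ ≤ K * ‖y - x‖ := by
    intro x hx y hy
    exact (convex_Ioc Tstar T₀).norm_image_sub_le_of_norm_hasDerivWithin_le
      (fun t ht => (hω t ht).hasDerivWithinAt) (fun t ht => hbound t ht) hx hy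
  have hIoc_mem : Set.Ioc Tstar T₀ ∈ nhdsWithin Tstar (Set.Ioi Tstar) :=
    Ioc_mem_nhdsGT_of_mem ⟨le_refl _, hT⟩
  -- the image filter is Cauchy
  have hcauchy : Cauchy (map ω (nhdsWithin Tstar (Set.Ioi Tstar))) := by
    rw [Metric.cauchy_iff]
    refine ⟨Filter.map_neBot, ?_⟩
    intro ε hε
    obtain ⟨δ, hδ0, hδ⟩ : ∃ δ : ℝ, 0 < δ ∧ 2 * (K * δ) < ε :=
      ⟨ε / (4 * K), by positivity, by
        have : K * (ε / (4 * K)) = ε / 4 := by field_simp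
        rw [this]; linarith⟩
    set m : ℝ := min T₀ (Tstar + δ) with hm
    have hm1 : Tstar < m := lt_min hT (by linarith)
    have hsub : Set.Ioc Tstar m ⊆ Set.Ioc Tstar T₀ :=
      Set.Ioc_subset_Ioc le_rfl (min_le_left _ _)
    refine ⟨ω '' Set.Ioc Tstar m, image_mem_map (Ioc_mem_nhdsGT_of_mem ⟨le_refl _, hm1⟩), ?_⟩
    rintro _ ⟨a, ha, rfl⟩ _ ⟨b, hb, rfl⟩
    have hab : ‖ω a - ω b‖ ≤ K * ‖a - b‖ := hlip b (hsub hb) a (hsub ha)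
    have h3 : ‖a - b‖ ≤ 2 * δ := by
      have := ha.1;  have := ha.2; have := hb.1; have := hb.2
      have hma : m ≤ Tstar + δ := min_le_right _ _
      rw [Real.norm_eq_abs, abs_le]
      constructor <;> linarith
    calc dist (ω a) (ω b) = ‖ω a - ω b‖ := by rw [dist_eq_norm]
      _ ≤ K * ‖a - b‖ := hab
      _ ≤ K * (2 * δ) := by nlinarith
      _ < ε := by linarith [hδ]
  obtain ⟨L, hL⟩ := CompleteSpace.complete hcauchy
  have htend : Tendsto ω (nhdsWithin Tstar (Set.Ioi Tstar)) (nhds L) := hL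
  refine ⟨L, ?_, htend⟩
  -- norm of the limit
  have h1 : Tendsto (fun T => ‖ω T‖) (nhdsWithin Tstar (Set.Ioi Tstar)) (nhds ‖L‖) :=
    (continuous_norm.tendsto L).comp htend
  have h2 : Tendsto (fun T => ‖ω T‖) (nhdsWithin Tstar (Set.Ioi Tstar)) (nhds 1) := by
    refine Tendsto.congr' ?_ tendsto_const_nhds
    filter_upwards [hIoc_mem] with T hT' using (hsphere T hT').symm
  exact tendsto_nhds_unique h1 h2
end
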